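/- arXiv:2409.05657 — 5 statements merged into one kernel-verified Lean document; each statement's English description precedes it below -/
import Mathlib

section
/- Let θ̂ be a global minimizer of the original empirical loss ℓ̂ over ℝ^d and θ̂′ a global minimizer of the perturbed empirical loss ℓ̂′ over ℝ^d. Assume ℓ̂ is m-strongly convex for some m > 0, and assume the loss at the swapped data points varies Lipschitz-ly between the two minimizers, i.e. |ℓ(θ̂′, z_j) − ℓ(θ̂, z_j)| ≤ L‖θ̂′ − θ̂‖₂ and |ℓ(θ̂, z_j′) − ℓ(θ̂′, z_j′)| ≤ L‖θ̂′ − θ̂‖₂ for some L > 0 (as holds when ℓ(·, z) is L-Lipschitz in θ). Then ‖θ̂ − θ̂′‖₂ ≤ 4L/(m n). -/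
noncomputable section

/-- `f` is `m`-strongly convex on `ℝ^d`: `x ↦ f x - (m/2)‖x‖₂²` is convex. -/
def StrongConvexOnUniv {d : ℕ} (m : ℝ) (f : EuclideanSpace ℝ (Fin d) → ℝ) : Prop :=
  ConvexOn ℝ Set.univ fun x => f x - m / 2 * ‖x‖ ^ 2

/-- The original empirical loss `ℓ̂(θ) = (1/n) ∑ᵢ ℓ(θ, zᵢ)`. -/
def empLoss {d n : ℕ} {Z : Type*} (ℓ : EuclideanSpace ℝ (Fin d) → Z → ℝ)
    (z : Fin n → Z) (θ : EuclideanSpace ℝ (Fin d)) : ℝ :=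
  (1 / (n : ℝ)) * ∑ i, ℓ θ (z i)

/-- The perturbed empirical loss `ℓ̂′(θ) = (1/n) ∑_{i≠j} ℓ(θ, zᵢ) + (1/n) ℓ(θ, zⱼ′)`. -/
def empLossPert {d n : ℕ} {Z : Type*} (ℓ : EuclideanSpace ℝ (Fin d) → Z → ℝ)
    (z : Fin n → Z) (j : Fin n) (z' : Z) (θ : EuclideanSpace ℝ (Fin d)) : ℝ :=
  (1 / (n : ℝ)) * ∑ i ∈ Finset.univ.erase j, ℓ θ (z i) + (1 / (n : ℝ)) * ℓ θ z'

/-- If `θ̂` minimizes the original empirical loss, `θ̂′` minimizes the perturbed one,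
the original empirical loss is `m`-strongly convex, and the losses at the swapped data
points vary Lipschitz-ly between the two minimizers, then `‖θ̂ - θ̂′‖₂ ≤ 4L/(mn)`. -/
theorem stmt_0 {d n : ℕ} (hn : 1 ≤ n) {Z : Type*} (z : Fin n → Z) (j : Fin n) (z' : Z)
    (ℓ : EuclideanSpace ℝ (Fin d) → Z → ℝ) (m L : ℝ) (hm : 0 < m) (hL : 0 < L)
    (θhat θhat' : EuclideanSpace ℝ (Fin d))
    (hsc : StrongConvexOnUniv m (empLoss ℓ z))
    (hmin : ∀ θ, empLoss ℓ z θhat ≤ empLoss ℓ z θ)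
    (hmin' : ∀ θ, empLossPert ℓ z j z' θhat' ≤ empLossPert ℓ z j z' θ)
    (hlip₁ : |ℓ θhat' (z j) - ℓ θhat (z j)| ≤ L * ‖θhat' - θhat‖)
    (hlip₂ : |ℓ θhat z' - ℓ θhat' z'| ≤ L * ‖θhat' - θhat‖) :
    ‖θhat - θhat'‖ ≤ 4 * L / (m * n) := by
  set f := empLoss ℓ z with hf
  set r := ‖θhat' - θhat‖ with hr
  have hn0 : (0 : ℝ) < n := by exact_mod_cast hn
  have hr0 : 0 ≤ r := norm_nonneg _
  -- decomposition of the original loss via the perturbed loss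
  have hdec : ∀ θ, f θ = empLossPert ℓ z j z' θ + (1 / (n : ℝ)) * (ℓ θ (z j) - ℓ θ z') := by
    intro θ
    simp only [hf, empLoss, empLossPert]
    rw [← Finset.sum_erase_add _ _ (Finset.mem_univ j)]
    ring
  -- upper bound on the loss gap
  have hD : f θhat' - f θhat ≤ 2 * L / n * r := by
    have h1 := hmin' θhat
    have habs1 : ℓ θhat' (z j) - ℓ θhat (z j) ≤ L * r := le_trans (le_abs_self _) hlip₁
    have habs2 : ℓ θhat z' - ℓ θhat' z' ≤ L * r := le_trans (le_abs_self _) hlip₂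
    have hpos : (0 : ℝ) < 1 / (n : ℝ) := by positivity
    have hb1 := mul_le_mul_of_nonneg_left habs1 hpos.le
    have hb2 := mul_le_mul_of_nonneg_left habs2 hpos.le
    rw [hdec θhat', hdec θhat]
    have heq : 2 * L / (n : ℝ) * r = 1 / (n : ℝ) * (L * r) + 1 / (n : ℝ) * (L * r) := by ring
    rw [heq]
    nlinarith [h1, hb1, hb2]
  -- strong convexity lower bound
  have hsc2 : StrongConvexOn Set.univ m f := strongConvexOn_iff_convex.2 hsc
  have key : ∀ t ∈ Set.Ioo (0 : ℝ) 1, m / 2 * (1 - t) * r ^ 2 ≤ f θhat' - f θhat := by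
    intro t ht
    have h := hsc2.2 (Set.mem_univ θhat') (Set.mem_univ θhat) ht.1.le
      (by linarith [ht.2] : (0:ℝ) ≤ 1 - t) (by ring : t + (1 - t) = 1)
    have h2 := hmin (t • θhat' + (1 - t) • θhat)
    simp only [smul_eq_mul, ← hr] at h
    have ht0 : (0 : ℝ) < t := ht.1
    nlinarith [h2.trans h]
  have hlim : m / 2 * r ^ 2 ≤ f θhat' - f θhat := by
    have h1 : Filter.Tendsto (fun t : ℝ => m / 2 * (1 - t) * r ^ 2)
        (nhdsWithin 0 (Set.Ioi 0)) (nhds (m / 2 * (1 - 0) * r ^ 2)) := by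
      apply Filter.Tendsto.mono_left _ nhdsWithin_le_nhds
      exact (Continuous.tendsto (by continuity) 0)
    have hev : ∀ᶠ t in nhdsWithin (0 : ℝ) (Set.Ioi 0),
        m / 2 * (1 - t) * r ^ 2 ≤ f θhat' - f θhat :=
      Filter.eventually_of_mem (Ioo_mem_nhdsGT_of_mem (by norm_num : (0:ℝ) ∈ Set.Ico (0:ℝ) 1))
        (fun t ht => key t ht)
    simpa using le_of_tendsto h1 hev
  -- conclude
  rw [norm_sub_rev, ← hr]
  rcases eq_or_lt_of_le hr0 with h0 | h0
  · rw [← h0]; positivity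
  · rw [le_div_iff₀ (by positivity)]
    have h2 : m / 2 * r ^ 2 ≤ 2 * L / (n : ℝ) * r := hlim.trans hD
    have h3 := mul_le_mul_of_nonneg_right h2 hn0.le
    have h4 : 2 * L / (n : ℝ) * r * (n : ℝ) = 2 * L * r := by field_simp
    rw [h4] at h3
    nlinarith [h3, mul_pos h0 h0]
end
end

section
/- Let S ⊆ {1,…,n} be a set of k indices, and for each j ∈ S let z_j′ be a perturbed data point; define the perturbed empirical loss ℓ̂′(θ) = (1/n)∑_{i∉S} ℓ(θ, z_i) + (1/n)∑_{j∈S} ℓ(θ, z_j′). Let θ̂ minimize the original empirical loss ℓ̂ and θ̂′ minimize ℓ̂′ over ℝ^d. Assume ℓ̂ is m-strongly convex for some m > 0, and for every j ∈ S, |ℓ(θ̂′, z_j) − ℓ(θ̂, z_j)| ≤ L‖θ̂′ − θ̂‖₂ and |ℓ(θ̂, z_j′) − ℓ(θ̂′, z_j′)| ≤ L‖θ̂′ − θ̂‖₂ for some L > 0. Then ‖θ̂ − θ̂′‖₂ ≤ 4Lk/(m n). -/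
noncomputable section

/-- The perturbed empirical loss where each data point `z j`, `j ∈ S`, is replaced by `z' j`:
`ℓ̂′(θ) = (1/n) ∑_{i∉S} ℓ(θ, zᵢ) + (1/n) ∑_{j∈S} ℓ(θ, zⱼ′)`. -/
def empLossPertMulti {d n : ℕ} {Z : Type*} (ℓ : EuclideanSpace ℝ (Fin d) → Z → ℝ)
    (z : Fin n → Z) (S : Finset (Fin n)) (z' : Fin n → Z)
    (θ : EuclideanSpace ℝ (Fin d)) : ℝ :=
  (1 / (n : ℝ)) * ∑ i ∈ Finset.univ \ S, ℓ θ (z i) + (1 / (n : ℝ)) * ∑ j ∈ S, ℓ θ (z' j)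

/-- Strong convexity at a minimizer gives a quadratic growth bound. -/
lemma strong_min_growth {d : ℕ} {m : ℝ} {f : EuclideanSpace ℝ (Fin d) → ℝ}
    (hsc : StrongConvexOnUniv m f) (θ θ' : EuclideanSpace ℝ (Fin d))
    (hmin : ∀ x, f θ ≤ f x) :
    m / 2 * ‖θ - θ'‖ ^ 2 ≤ f θ' - f θ := by
  have hsc' : StrongConvexOn Set.univ m f := strongConvexOn_iff_convex.mpr hsc
  set c : ℝ := m / 2 * ‖θ - θ'‖ ^ 2 with hc
  set D : ℝ := f θ' - f θ with hD
  have hD0 : 0 ≤ D := by have := hmin θ'; simp only [hD]; linarith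
  have key : ∀ t : ℝ, 0 < t → t < 1 → (1 - t) * c ≤ D := by
    intro t ht0 ht1
    have h := hsc'.2 (Set.mem_univ θ) (Set.mem_univ θ') (by linarith : (0:ℝ) ≤ 1 - t)
      ht0.le (by ring)
    have hmix := hmin ((1 - t) • θ + t • θ')
    simp only [smul_eq_mul] at h
    have ht : t * ((1 - t) * c) ≤ t * D := by
      have : f θ ≤ (1 - t) * f θ + t * f θ' - (1 - t) * t * c := le_trans hmix h
      nlinarith
    exact le_of_mul_le_mul_left ht ht0
  by_contra hcon
  push_neg at hcon
  have hc0 : 0 < c := lt_of_le_of_lt hD0 hcon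
  have ht0 : 0 < (c - D) / (2 * c) := div_pos (by linarith) (by positivity)
  have ht1 : (c - D) / (2 * c) < 1 := by
    rw [div_lt_one (by positivity)]; linarith
  have hkey := key _ ht0 ht1
  rw [sub_mul, one_mul, div_mul_eq_mul_div, sub_le_iff_le_add] at hkey
  have heq : (c - D) * c / (2 * c) = (c - D) / 2 := by
    field_simp
  rw [heq] at hkey
  linarith

/-- If `k` data points indexed by `S` are perturbed, `θ̂` minimizes the original empirical
loss, `θ̂′` minimizes the perturbed one, the original empirical loss is `m`-strongly convex,
and the losses at all swapped data points vary Lipschitz-ly between the two minimizers,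
then `‖θ̂ - θ̂′‖₂ ≤ 4Lk/(mn)`. -/
theorem stmt_3 {d n k : ℕ} (hn : 1 ≤ n) {Z : Type*} (z : Fin n → Z)
    (S : Finset (Fin n)) (hS : S.card = k) (z' : Fin n → Z)
    (ℓ : EuclideanSpace ℝ (Fin d) → Z → ℝ) (m L : ℝ) (hm : 0 < m) (hL : 0 < L)
    (θhat θhat' : EuclideanSpace ℝ (Fin d))
    (hsc : StrongConvexOnUniv m (empLoss ℓ z))
    (hmin : ∀ θ, empLoss ℓ z θhat ≤ empLoss ℓ z θ)
    (hmin' : ∀ θ, empLossPertMulti ℓ z S z' θhat' ≤ empLossPertMulti ℓ z S z' θ)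
    (hlip₁ : ∀ j ∈ S, |ℓ θhat' (z j) - ℓ θhat (z j)| ≤ L * ‖θhat' - θhat‖)
    (hlip₂ : ∀ j ∈ S, |ℓ θhat (z' j) - ℓ θhat' (z' j)| ≤ L * ‖θhat' - θhat‖) :
    ‖θhat - θhat'‖ ≤ 4 * L * k / (m * n) := by
  have hn0 : (0:ℝ) < n := by exact_mod_cast hn
  set r : ℝ := ‖θhat - θhat'‖ with hr
  have hr' : ‖θhat' - θhat‖ = r := norm_sub_rev _ _
  have hgrow : m / 2 * r ^ 2 ≤ empLoss ℓ z θhat' - empLoss ℓ z θhat :=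
    strong_min_growth hsc θhat θhat' hmin
  have hsplit : ∀ θ, empLoss ℓ z θ = (1 / (n : ℝ)) * ∑ i ∈ Finset.univ \ S, ℓ θ (z i)
      + (1 / (n : ℝ)) * ∑ j ∈ S, ℓ θ (z j) := by
    intro θ
    rw [empLoss, ← mul_add, ← Finset.sum_sdiff (Finset.subset_univ S)]
  have hgap : empLoss ℓ z θhat' - empLoss ℓ z θhat
      = (empLossPertMulti ℓ z S z' θhat' - empLossPertMulti ℓ z S z' θhat)
      + (1 / (n : ℝ)) * ∑ j ∈ S, ((ℓ θhat' (z j) - ℓ θhat (z j))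
          + (ℓ θhat (z' j) - ℓ θhat' (z' j))) := by
    rw [hsplit, hsplit, empLossPertMulti, empLossPertMulti]
    simp only [Finset.sum_add_distrib, Finset.sum_sub_distrib]
    ring
  have hpert : empLossPertMulti ℓ z S z' θhat' - empLossPertMulti ℓ z S z' θhat ≤ 0 := by
    have := hmin' θhat; linarith
  have hsum : ∑ j ∈ S, ((ℓ θhat' (z j) - ℓ θhat (z j))
      + (ℓ θhat (z' j) - ℓ θhat' (z' j))) ≤ k * (2 * L * r) := by
    calc ∑ j ∈ S, ((ℓ θhat' (z j) - ℓ θhat (z j)) + (ℓ θhat (z' j) - ℓ θhat' (z' j)))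
        ≤ ∑ _j ∈ S, (2 * L * r) := by
          refine Finset.sum_le_sum fun j hj => ?_
          have h1 := (abs_le.mp (hlip₁ j hj)).2
          have h2 := (abs_le.mp (hlip₂ j hj)).2
          rw [hr'] at h1 h2; linarith
      _ = k * (2 * L * r) := by rw [Finset.sum_const, hS]; simp [mul_comm]
  have hbound : m / 2 * r ^ 2 ≤ (1 / (n : ℝ)) * (k * (2 * L * r)) := by
    rw [hgap] at hgrow
    have hmul : (1 / (n : ℝ)) * ∑ j ∈ S, ((ℓ θhat' (z j) - ℓ θhat (z j))
        + (ℓ θhat (z' j) - ℓ θhat' (z' j))) ≤ (1 / (n : ℝ)) * (k * (2 * L * r)) := by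
      apply mul_le_mul_of_nonneg_left hsum (by positivity)
    linarith
  rcases eq_or_lt_of_le (norm_nonneg (θhat - θhat')) with h0 | h0
  · rw [hr, ← h0]; positivity
  · rw [le_div_iff₀ (by positivity)]
    have hrn : 0 < r := h0
    have hb2 : m / 2 * r ^ 2 * n ≤ k * (2 * L * r) := by
      have h := mul_le_mul_of_nonneg_right hbound hn0.le
      calc m / 2 * r ^ 2 * n ≤ (1 / n) * (k * (2 * L * r)) * n := h
        _ = k * (2 * L * r) := by field_simp
    nlinarith [hb2, hrn, mul_pos hm hn0]
end
end

section
/- Let θ̂ minimize the original empirical loss ℓ̂ and θ̂′ minimize the perturbed empirical loss ℓ̂′ over ℝ^d, and assume: (i) ℓ̂ is m-strongly convex (m > 0); (ii) |ℓ(θ̂′, z) − ℓ(θ̂, z)| ≤ L‖θ̂′ − θ̂‖₂ for z ∈ {z_j, z_j′} with L > 0; (iii) for every i ∈ {1,…,n}, ‖∇²_θℓ(θ̂′, z_i) − ∇²_θℓ(θ̂, z_i)‖_op ≤ M‖θ̂′ − θ̂‖₂ for some M > 0; and (iv) ‖∇²_θℓ(θ̂′, z_j)‖_op ≤ B and ‖∇²_θℓ(θ̂′,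 z_j′)‖_op ≤ B for some B > 0. Then the empirical Hessians satisfy ‖H′(θ̂′) − H(θ̂)‖_op ≤ M‖θ̂′ − θ̂‖₂ + 2B/n ≤ 4LM/(m n) + 2B/n. -/
noncomputable section

/-- The Hessian `∇²f(θ)` of `f : ℝ^d → ℝ` at `θ`, as a linear operator on `ℝ^d`. -/
def hessian {d : ℕ} (f : EuclideanSpace ℝ (Fin d) → ℝ) (θ : EuclideanSpace ℝ (Fin d)) :
    EuclideanSpace ℝ (Fin d) →L[ℝ] EuclideanSpace ℝ (Fin d) :=
  fderiv ℝ (fun x => gradient f x) θ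

/-- The empirical Hessian `H(θ) = (1/n) ∑ᵢ ∇²_θℓ(θ, zᵢ)`. -/
def empHess {d n : ℕ} {Z : Type*} (ℓ : EuclideanSpace ℝ (Fin d) → Z → ℝ)
    (z : Fin n → Z) (θ : EuclideanSpace ℝ (Fin d)) :
    EuclideanSpace ℝ (Fin d) →L[ℝ] EuclideanSpace ℝ (Fin d) :=
  (1 / (n : ℝ)) • ∑ i, hessian (fun θ' => ℓ θ' (z i)) θ

/-- The perturbed empirical Hessian
`H′(θ) = (1/n) ∑_{i≠j} ∇²_θℓ(θ, zᵢ) + (1/n) ∇²_θℓ(θ, zⱼ′)`. -/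
def empHessPert {d n : ℕ} {Z : Type*} (ℓ : EuclideanSpace ℝ (Fin d) → Z → ℝ)
    (z : Fin n → Z) (j : Fin n) (z' : Z) (θ : EuclideanSpace ℝ (Fin d)) :
    EuclideanSpace ℝ (Fin d) →L[ℝ] EuclideanSpace ℝ (Fin d) :=
  (1 / (n : ℝ)) • ∑ i ∈ Finset.univ.erase j, hessian (fun θ' => ℓ θ' (z i)) θ +
    (1 / (n : ℝ)) • hessian (fun θ' => ℓ θ' z') θ


open Filter Topology

/-- Quadratic growth at a minimizer for strongly convex functions. -/
lemma growth_lemma_aux {E : Type*} [NormedAddCommGroup E] [InnerProductSpace ℝ E]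
    {m : ℝ} {f : E → ℝ} (hsc : ConvexOn ℝ Set.univ fun x => f x - m / 2 * ‖x‖ ^ 2)
    {θhat : E} (hmin : ∀ θ, f θhat ≤ f θ) (θ' : E) :
    m / 2 * ‖θ' - θhat‖ ^ 2 ≤ f θ' - f θhat := by
  have hsc' : StrongConvexOn Set.univ m f := strongConvexOn_iff_convex.mpr hsc
  set D := ‖θ' - θhat‖ with hD
  have key : ∀ t : ℝ, t ∈ Set.Ioo (0:ℝ) 1 → (1 - t) * (m / 2 * D ^ 2) ≤ f θ' - f θhat := by
    intro t ht
    obtain ⟨ht0, ht1⟩ := ht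
    have h := hsc'.2 (Set.mem_univ θ') (Set.mem_univ θhat) (le_of_lt ht0)
      (by linarith : (0:ℝ) ≤ 1 - t) (by ring)
    have h2 := hmin (t • θ' + (1 - t) • θhat)
    simp only [smul_eq_mul] at h
    have h3 : t * ((1 - t) * (m / 2 * D ^ 2)) ≤ t * (f θ' - f θhat) := by nlinarith
    exact le_of_mul_le_mul_left h3 ht0
  have htend : Tendsto (fun t : ℝ => (1 - t) * (m / 2 * D ^ 2)) (𝓝[>] (0:ℝ))
      (𝓝 ((1 - 0) * (m / 2 * D ^ 2))) := by
    apply Tendsto.mono_left _ nhdsWithin_le_nhds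
    exact Continuous.tendsto (by continuity) 0
  have : (1 - (0:ℝ)) * (m / 2 * D ^ 2) ≤ f θ' - f θhat := by
    refine le_of_tendsto htend ?_
    filter_upwards [Ioo_mem_nhdsGT_of_mem (by norm_num : (0:ℝ) ∈ Set.Ico (0:ℝ) 1)] with t ht
    exact key t ht
  linarith

set_option maxHeartbeats 1000000 in
/-- Under strong convexity, the pointwise Lipschitz bounds on the swapped losses, the
`M`-Lipschitzness of the per-sample Hessians between the two minimizers, and the `B`-bound
on the Hessians at the swapped points, the empirical Hessians satisfy
`‖H′(θ̂′) - H(θ̂)‖_op ≤ M‖θ̂′ - θ̂‖₂ + 2B/n ≤ 4LM/(mn) + 2B/n`. -/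
theorem stmt_6 {d n : ℕ} (hn : 1 ≤ n) {Z : Type*} (z : Fin n → Z) (j : Fin n) (z' : Z)
    (ℓ : EuclideanSpace ℝ (Fin d) → Z → ℝ)
    (hC2 : ∀ zz : Z, ContDiff ℝ 2 (fun θ => ℓ θ zz))
    (m L M B : ℝ) (hm : 0 < m) (hL : 0 < L) (hM : 0 < M) (hB : 0 < B)
    (θhat θhat' : EuclideanSpace ℝ (Fin d))
    (hsc : StrongConvexOnUniv m (empLoss ℓ z))
    (hmin : ∀ θ, empLoss ℓ z θhat ≤ empLoss ℓ z θ)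
    (hmin' : ∀ θ, empLossPert ℓ z j z' θhat' ≤ empLossPert ℓ z j z' θ)
    (hlip₁ : |ℓ θhat' (z j) - ℓ θhat (z j)| ≤ L * ‖θhat' - θhat‖)
    (hlip₂ : |ℓ θhat z' - ℓ θhat' z'| ≤ L * ‖θhat' - θhat‖)
    (hhessLip : ∀ i : Fin n,
      ‖hessian (fun θ' => ℓ θ' (z i)) θhat' - hessian (fun θ' => ℓ θ' (z i)) θhat‖ ≤
        M * ‖θhat' - θhat‖)
    (hhessB₁ : ‖hessian (fun θ' => ℓ θ' (z j)) θhat'‖ ≤ B)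
    (hhessB₂ : ‖hessian (fun θ' => ℓ θ' z') θhat'‖ ≤ B) :
    ‖empHessPert ℓ z j z' θhat' - empHess ℓ z θhat‖ ≤ M * ‖θhat' - θhat‖ + 2 * B / n ∧
      M * ‖θhat' - θhat‖ + 2 * B / n ≤ 4 * L * M / (m * n) + 2 * B / n := by
  have hn0 : (0:ℝ) < (n:ℝ) := by exact_mod_cast hn
  set D := ‖θhat' - θhat‖ with hDdef
  have hD0 : 0 ≤ D := norm_nonneg _
  -- relation between the two empirical losses
  have hrel : ∀ θ, empLoss ℓ z θ =
      empLossPert ℓ z j z' θ + (1 / (n:ℝ)) * (ℓ θ (z j) - ℓ θ z') := by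
    intro θ
    simp only [empLoss, empLossPert]
    rw [Finset.sum_erase_eq_sub (Finset.mem_univ j)]
    ring
  -- stability bound : D ≤ 4L/(mn)
  have hgrow := growth_lemma_aux hsc hmin θhat'
  have hdiff : empLoss ℓ z θhat' - empLoss ℓ z θhat ≤ 2 * L * D / n := by
    have h1 := hmin' θhat
    have h2 := hrel θhat'
    have h3 := hrel θhat
    have h4 : ℓ θhat' (z j) - ℓ θhat (z j) ≤ L * D := (abs_le.mp hlip₁).2
    have h5 : ℓ θhat z' - ℓ θhat' z' ≤ L * D := (abs_le.mp hlip₂).2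
    have hinv : (0:ℝ) < 1 / (n:ℝ) := by positivity
    have : empLoss ℓ z θhat' - empLoss ℓ z θhat ≤
        (1 / (n:ℝ)) * ((ℓ θhat' (z j) - ℓ θhat (z j)) + (ℓ θhat z' - ℓ θhat' z')) := by
      rw [h2, h3]; nlinarith
    calc empLoss ℓ z θhat' - empLoss ℓ z θhat ≤
        (1 / (n:ℝ)) * ((ℓ θhat' (z j) - ℓ θhat (z j)) + (ℓ θhat z' - ℓ θhat' z')) := this
      _ ≤ (1 / (n:ℝ)) * (L * D + L * D) := by nlinarith
      _ = 2 * L * D / n := by ring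
  have hDbound : D ≤ 4 * L / (m * n) := by
    have hq : m / 2 * D ^ 2 ≤ 2 * L * D / n := le_trans hgrow hdiff
    rcases eq_or_lt_of_le hD0 with h | h
    · rw [← h]; positivity
    · have hq2 : m / 2 * D ^ 2 * n ≤ 2 * L * D := by
        have h2 := mul_le_mul_of_nonneg_right hq (le_of_lt hn0)
        rwa [div_mul_cancel₀ _ (ne_of_gt hn0)] at h2
      rw [le_div_iff₀ (by positivity : (0:ℝ) < m * n)]
      nlinarith [hq2, h]
  -- Hessian decomposition
  set H := fun (zz : Z) (θ : EuclideanSpace ℝ (Fin d)) => hessian (fun θ' => ℓ θ' zz) θ with hH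
  have hdecomp : empHessPert ℓ z j z' θhat' - empHess ℓ z θhat =
      (1 / (n:ℝ)) • (∑ i, (H (z i) θhat' - H (z i) θhat)) +
        (1 / (n:ℝ)) • (H z' θhat' - H (z j) θhat') := by
    simp only [empHessPert, empHess, hH]
    rw [Finset.sum_erase_eq_sub (Finset.mem_univ j), Finset.sum_sub_distrib]
    module
  have habs : |(1 / (n:ℝ))| = 1 / (n:ℝ) := abs_of_pos (by positivity)
  have hfirst : ‖(1 / (n:ℝ)) • (∑ i, (H (z i) θhat' - H (z i) θhat))‖ ≤ M * D := by
    have hsum : ‖∑ i, (H (z i) θhat' - H (z i) θhat)‖ ≤ (n:ℝ) * (M * D) := by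
      calc ‖∑ i, (H (z i) θhat' - H (z i) θhat)‖ ≤ ∑ i : Fin n, (M * D) :=
            norm_sum_le_of_le _ fun i _ => hhessLip i
        _ = (n:ℝ) * (M * D) := by simp [Finset.sum_const, mul_comm]
    calc ‖(1 / (n:ℝ)) • (∑ i, (H (z i) θhat' - H (z i) θhat))‖ ≤
        ‖(1 / (n:ℝ))‖ * ‖∑ i, (H (z i) θhat' - H (z i) θhat)‖ :=
          norm_smul_le (1 / (n:ℝ)) (∑ i, (H (z i) θhat' - H (z i) θhat))
      _ ≤ (1 / (n:ℝ)) * ((n:ℝ) * (M * D)) := by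
          rw [Real.norm_eq_abs, habs]
          exact mul_le_mul_of_nonneg_left hsum (by positivity)
      _ = M * D := by field_simp
  have hsecond : ‖(1 / (n:ℝ)) • (H z' θhat' - H (z j) θhat')‖ ≤ 2 * B / n := by
    have hb : ‖H z' θhat' - H (z j) θhat'‖ ≤ 2 * B := by
      calc ‖H z' θhat' - H (z j) θhat'‖ ≤ ‖H z' θhat'‖ + ‖H (z j) θhat'‖ := norm_sub_le _ _
        _ ≤ B + B := add_le_add hhessB₂ hhessB₁
        _ = 2 * B := by ring
    calc ‖(1 / (n:ℝ)) • (H z' θhat' - H (z j) θhat')‖ ≤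
        ‖(1 / (n:ℝ))‖ * ‖H z' θhat' - H (z j) θhat'‖ :=
          norm_smul_le (1 / (n:ℝ)) (H z' θhat' - H (z j) θhat')
      _ ≤ (1 / (n:ℝ)) * (2 * B) := by
          rw [Real.norm_eq_abs, habs]
          exact mul_le_mul_of_nonneg_left hb (by positivity)
      _ = 2 * B / n := by ring
  constructor
  · calc ‖empHessPert ℓ z j z' θhat' - empHess ℓ z θhat‖ =
        ‖(1 / (n:ℝ)) • (∑ i, (H (z i) θhat' - H (z i) θhat)) +
          (1 / (n:ℝ)) • (H z' θhat' - H (z j) θhat')‖ := by rw [hdecomp]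
      _ ≤ ‖(1 / (n:ℝ)) • (∑ i, (H (z i) θhat' - H (z i) θhat))‖ +
          ‖(1 / (n:ℝ)) • (H z' θhat' - H (z j) θhat')‖ := norm_add_le _ _
      _ ≤ M * D + 2 * B / n := add_le_add hfirst hsecond
  · have : M * D ≤ M * (4 * L / (m * n)) :=
      mul_le_mul_of_nonneg_left hDbound (le_of_lt hM)
    have heq : M * (4 * L / (m * n)) = 4 * L * M / (m * n) := by ring
    linarith [this, heq ▸ this]
end
end

section
/- Let θ̂ minimize the original empirical loss ℓ̂ and θ̂′ minimize the perturbed empirical loss ℓ̂′ over ℝ^d, and assume: (i) ℓ̂ and ℓ̂′ are m-strongly convex (m > 0); (ii) |ℓ(θ̂′, z) − ℓ(θ̂, z)| ≤ L‖θ̂′ − θ̂‖₂ for z ∈ {z_j, z_j′} with L > 0; (iii) for every i ∈ {1,…,n}, ‖∇²_θℓ(θ̂′, z_i) − ∇²_θℓ(θ̂, z_i)‖_op ≤ M‖θ̂′ − θ̂‖₂ for some M > 0; and (iv) ‖∇²_θℓ(θ̂′, z_j)‖_op ≤ B and ‖∇²_θℓ(θ̂′, z_j′)‖_op ≤ B for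 some B > 0. Then the empirical Hessians H(θ̂) and H′(θ̂′) are both invertible and ‖H′(θ̂′)^{-1} − H(θ̂)^{-1}‖_op ≤ (4LM + 2Bm)/(m³ n). -/
noncomputable section

open InnerProductSpace Set Filter Topology

variable {d : ℕ}

local notation "E" => EuclideanSpace ℝ (Fin d)
local notation "⟪" x ", " y "⟫" => @inner ℝ _ _ x y

lemma grad_inner (f : E → ℝ) (x w : E) : ⟪gradient f x, w⟫ = fderiv ℝ f x w := by
  rw [← InnerProductSpace.toDual_apply_apply, gradient, LinearIsometryEquiv.apply_symm_apply]

lemma strong_min {m : ℝ} {f : E → ℝ}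
    (hsc : StrongConvexOnUniv m f) {x : E} (hmin : ∀ y, f x ≤ f y) (y : E) :
    f x + m / 2 * ‖y - x‖ ^ 2 ≤ f y := by
  have hS : StrongConvexOn univ m f := (strongConvexOn_iff_convex).2 hsc
  set c : ℝ := m / 2 * ‖y - x‖ ^ 2 with hc
  have key : ∀ a : ℝ, a ∈ Ioo (0:ℝ) 1 → f x + (1 - a) * c ≤ f y := by
    intro a ha
    have hb : (0:ℝ) ≤ 1 - a := by linarith [ha.2]
    have h1 : f x ≤ f (a • y + (1 - a) • x) := hmin _
    have h2 := hS.2 (mem_univ y) (mem_univ x) ha.1.le hb (by ring)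
    simp only [smul_eq_mul] at h2
    have h3 : f x ≤ a * f y + (1 - a) * f x - a * (1 - a) * c := by
      exact h1.trans (h2.trans_eq rfl)
    nlinarith [ha.1]
  have htend : Tendsto (fun a : ℝ => f x + (1 - a) * c) (𝓝[>] (0:ℝ)) (𝓝 (f x + c)) := by
    have : Tendsto (fun a : ℝ => f x + (1 - a) * c) (𝓝 (0:ℝ)) (𝓝 (f x + (1 - 0) * c)) :=
      tendsto_const_nhds.add ((tendsto_const_nhds.sub tendsto_id).mul tendsto_const_nhds)
    simpa using this.mono_left nhdsWithin_le_nhds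
  refine le_of_tendsto htend ?_
  filter_upwards [Ioo_mem_nhdsGT_of_mem (by constructor <;> norm_num : (0:ℝ) ∈ Ico (0:ℝ) 1)]
    with a ha using key a ha

lemma gradient_contDiff {f : E → ℝ} (hf : ContDiff ℝ 2 f) : ContDiff ℝ 1 (gradient f) := by
  have h1 : ContDiff ℝ 1 (fderiv ℝ f) := hf.fderiv_right (by norm_num)
  have hT : ContDiff ℝ 1 (fun D : (E →L[ℝ] ℝ) => (InnerProductSpace.toDual ℝ E).symm D) :=
    ((InnerProductSpace.toDual ℝ E).symm.toContinuousLinearEquiv.toContinuousLinearMap).contDiff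
  exact hT.comp h1

lemma hess_lower {m : ℝ} {f : E → ℝ} (hf : ContDiff ℝ 2 f)
    (hsc : StrongConvexOnUniv m f) (θ v : E) :
    m * ‖v‖ ^ 2 ≤ ⟪hessian f θ v, v⟫ := by
  have hfd : Differentiable ℝ f := hf.differentiable (by norm_num)
  have hgd : Differentiable ℝ (gradient f) := (gradient_contDiff hf).differentiable one_ne_zero
  set h : ℝ → ℝ := fun t => ⟪gradient f (θ + t • v), v⟫ with hh
  have line : ∀ t : ℝ, HasDerivAt (fun s : ℝ => θ + s • v) v t := fun t => by
    simpa using ((hasDerivAt_id t).smul_const v).const_add θ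
  -- derivative of h at 0
  have hH : HasFDerivAt (gradient f) (hessian f θ) (θ + (0:ℝ) • v) := by
    rw [zero_smul, add_zero]; exact (hgd θ).hasFDerivAt
  have hc : HasDerivAt (fun t : ℝ => gradient f (θ + t • v)) (hessian f θ v) 0 :=
    by have hthis := hH.comp_hasDerivAt 0 (line 0); simpa [Function.comp_def] using hthis
  have hh0 : HasDerivAt h ⟪hessian f θ v, v⟫ 0 := by
    have hthis := ((innerSL ℝ v).hasFDerivAt).comp_hasDerivAt 0 hc
    have e1 : (innerSL ℝ v) ∘ (fun t : ℝ => gradient f (θ + t • v)) = h := by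
      funext t
      simp only [Function.comp_apply, innerSL_apply_apply, hh]
      exact real_inner_comm _ _
    have e2 : innerSL ℝ v (hessian f θ v) = ⟪hessian f θ v, v⟫ := by
      rw [innerSL_apply_apply]; exact real_inner_comm _ _
    rw [e1, e2] at hthis
    exact hthis
  -- derivative of ψ
  set ψ : ℝ → ℝ := fun t => f (θ + t • v) - m / 2 * ‖θ + t • v‖ ^ 2 with hψ
  have hψconv : ConvexOn ℝ univ ψ := by
    have haff := hsc.comp_affineMap (AffineMap.lineMap θ (θ + v) : ℝ →ᵃ[ℝ] _)
    have heq : ((fun x => f x - m / 2 * ‖x‖ ^ 2) ∘ (AffineMap.lineMap θ (θ + v))) = ψ := by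
      funext s
      simp [Function.comp, AffineMap.lineMap_apply, add_sub_cancel_left, hψ, add_comm]
    rw [heq] at haff
    simpa using haff
  have hφ : ∀ t : ℝ, HasDerivAt (fun s : ℝ => f (θ + s • v)) (h t) t := by
    intro t
    have hthis := ((hfd (θ + t • v)).hasFDerivAt).comp_hasDerivAt t (line t)
    have e : ⟪gradient f (θ + t • v), v⟫ = fderiv ℝ f (θ + t • v) v := grad_inner _ _ _
    simpa only [hh, e, Function.comp_def] using hthis
  have hq : ∀ t : ℝ, HasDerivAt (fun s : ℝ => m / 2 * ‖θ + s • v‖ ^ 2)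
      (m * ⟪θ, v⟫ + m * t * ‖v‖ ^ 2) t := by
    intro t
    have hexp : (fun s : ℝ => m / 2 * ‖θ + s • v‖ ^ 2)
        = fun s : ℝ => m / 2 * (‖θ‖ ^ 2 + 2 * (s * ⟪θ, v⟫) + s ^ 2 * ‖v‖ ^ 2) := by
      funext s
      rw [norm_add_sq_real, real_inner_smul_right, norm_smul]
      simp only [Real.norm_eq_abs, mul_pow, sq_abs]
    rw [hexp]
    have h1 : HasDerivAt (fun s : ℝ => 2 * (s * ⟪θ, v⟫)) (2 * ⟪θ, v⟫) t := by
      simpa using ((hasDerivAt_id t).mul_const ⟪θ, v⟫).const_mul 2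
    have h2 : HasDerivAt (fun s : ℝ => s ^ 2 * ‖v‖ ^ 2) (2 * t * ‖v‖ ^ 2) t := by
      simpa [mul_comm] using (hasDerivAt_pow 2 t).mul_const (‖v‖ ^ 2)
    have h3 := (((hasDerivAt_const t (‖θ‖ ^ 2)).add h1).add h2).const_mul (m / 2)
    exact h3.congr_deriv (by ring)
  have hψ' : ∀ t : ℝ, HasDerivAt ψ (h t - (m * ⟪θ, v⟫ + m * t * ‖v‖ ^ 2)) t :=
    fun t => (hφ t).sub (hq t)
  -- slope comparison for t > 0
  have hslope : ∀ t : ℝ, 0 < t → m * ‖v‖ ^ 2 ≤ slope h 0 t := by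
    intro t ht
    have s1 := hψconv.le_slope_of_hasDerivAt (mem_univ 0) (mem_univ t) ht (hψ' 0)
    have s2 := hψconv.slope_le_of_hasDerivAt (mem_univ 0) (mem_univ t) ht (hψ' t)
    have key : m * t * ‖v‖ ^ 2 ≤ h t - h 0 := by
      have := s1.trans s2
      nlinarith
    rw [slope_def_field, sub_zero, le_div_iff₀ ht]
    nlinarith
  have htend : Tendsto (slope h 0) (𝓝[>] (0:ℝ)) (𝓝 ⟪hessian f θ v, v⟫) :=
    (hasDerivAt_iff_tendsto_slope.1 hh0).mono_left
      (nhdsWithin_mono 0 fun x hx => ne_of_gt hx)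
  exact ge_of_tendsto htend (eventually_mem_nhdsWithin.mono fun t ht => hslope t ht)

lemma coercive_isUnit {m : ℝ} (hm : 0 < m) (A : E →L[ℝ] E)
    (hco : ∀ v : E, m * ‖v‖ ^ 2 ≤ ⟪A v, v⟫) :
    IsUnit A ∧ ‖Ring.inverse A‖ ≤ 1 / m := by
  have hlb : ∀ v : E, m * ‖v‖ ≤ ‖A v‖ := by
    intro v
    rcases eq_or_ne v 0 with rfl | hv
    · simp
    · have h1 : ⟪A v, v⟫ ≤ ‖A v‖ * ‖v‖ := real_inner_le_norm _ _
      have h2 : m * ‖v‖ ^ 2 ≤ ‖A v‖ * ‖v‖ := (hco v).trans h1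
      have hnv : (0:ℝ) < ‖v‖ := norm_pos_iff.2 hv
      nlinarith
  have hinj : Function.Injective A := by
    intro a b hab
    have h0 : ‖A (a - b)‖ = 0 := by rw [map_sub, hab, sub_self, norm_zero]
    have h1 := hlb (a - b)
    rw [h0] at h1
    have h2 : ‖a - b‖ ≤ 0 := by nlinarith
    exact sub_eq_zero.1 (norm_le_zero_iff.1 h2)
  have hsurj : Function.Surjective A := LinearMap.injective_iff_surjective.mp hinj
  let e : (EuclideanSpace ℝ (Fin d)) ≃L[ℝ] (EuclideanSpace ℝ (Fin d)) :=
    (LinearEquiv.ofBijective (A : _ →ₗ[ℝ] _) ⟨hinj, hsurj⟩).toContinuousLinearEquiv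
  have hAe : ∀ y, A y = e y := fun _ => rfl
  have hunit : IsUnit A := by
    refine ⟨⟨A, e.symm.toContinuousLinearMap, ?_, ?_⟩, rfl⟩
    · ext x
      simp only [ContinuousLinearMap.mul_apply, ContinuousLinearMap.one_apply,
        ContinuousLinearEquiv.coe_coe, hAe]
      rw [e.apply_symm_apply x]
    · ext x
      simp only [ContinuousLinearMap.mul_apply, ContinuousLinearMap.one_apply,
        ContinuousLinearEquiv.coe_coe, hAe]
      rw [e.symm_apply_apply x]
  refine ⟨hunit, ?_⟩
  have hmu := Ring.mul_inverse_cancel A hunit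
  refine ContinuousLinearMap.opNorm_le_bound _ (by positivity) (fun w => ?_)
  have hApp : A (Ring.inverse A w) = w := by
    have := congrArg (fun T : _ →L[ℝ] _ => T w) hmu
    simpa [ContinuousLinearMap.mul_apply] using this
  have h1 := hlb (Ring.inverse A w)
  rw [hApp] at h1
  rw [one_div, inv_mul_eq_div, le_div_iff₀ hm]
  linarith

lemma hessian_const_mul_sum {ι : Type*} (s : Finset ι) (F : ι → E → ℝ)
    (hF : ∀ i, ContDiff ℝ 2 (F i)) (c : ℝ) (θ : E) :
    hessian (fun x => c * ∑ i ∈ s, F i x) θ = c • ∑ i ∈ s, hessian (F i) θ := by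
  have hdiff : ∀ (i : ι) (x : E), DifferentiableAt ℝ (F i) x := fun i x =>
    ((hF i).differentiable (by norm_num)).differentiableAt
  have hgd : ∀ i : ι, Differentiable ℝ (gradient (F i)) := fun i =>
    (gradient_contDiff (hF i)).differentiable one_ne_zero
  have gradeq : (fun x => gradient (fun y => c * ∑ i ∈ s, F i y) x)
      = fun x => c • ∑ i ∈ s, gradient (F i) x := by
    funext x
    have hfd : fderiv ℝ (fun y => c * ∑ i ∈ s, F i y) x = c • ∑ i ∈ s, fderiv ℝ (F i) x := by
      rw [fderiv_const_mul (DifferentiableAt.fun_sum fun i _ => hdiff i x),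
        fderiv_fun_sum (fun i _ => hdiff i x)]
    show (InnerProductSpace.toDual ℝ _).symm (fderiv ℝ (fun y => c * ∑ i ∈ s, F i y) x)
        = c • ∑ i ∈ s, gradient (F i) x
    rw [hfd, map_smul, map_sum]
    rfl
  show fderiv ℝ (fun x => gradient (fun y => c * ∑ i ∈ s, F i y) x) θ
      = c • ∑ i ∈ s, hessian (F i) θ
  rw [gradeq, fderiv_fun_const_smul (DifferentiableAt.fun_sum fun i _ => (hgd i).differentiableAt),
    fderiv_fun_sum (fun i _ => (hgd i).differentiableAt)]
  rfl

section transfer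

variable {n : ℕ} {Z : Type*} (ℓ : EuclideanSpace ℝ (Fin d) → Z → ℝ)
  (z : Fin n → Z) (j : Fin n) (z' : Z)

lemma empLossPert_eq :
    empLossPert ℓ z j z' = empLoss ℓ (Function.update z j z') := by
  funext θ
  unfold empLoss empLossPert
  rw [← Finset.sum_erase_add _ _ (Finset.mem_univ j), Function.update_self, mul_add]
  congr 2
  exact (Finset.sum_congr rfl fun i hi => by
    rw [Function.update_of_ne (Finset.ne_of_mem_erase hi)]).symm

lemma empHessPert_eq (θ : EuclideanSpace ℝ (Fin d)) :
    empHessPert ℓ z j z' θ = empHess ℓ (Function.update z j z') θ := by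
  unfold empHess empHessPert
  rw [← Finset.sum_erase_add _ _ (Finset.mem_univ j), Function.update_self, smul_add]
  congr 2
  exact Finset.sum_congr rfl fun i hi => by
    rw [Function.update_of_ne (Finset.ne_of_mem_erase hi)]

lemma empLoss_sub_pert (θ : EuclideanSpace ℝ (Fin d)) :
    empLoss ℓ z θ - empLossPert ℓ z j z' θ = (1 / (n : ℝ)) * (ℓ θ (z j) - ℓ θ z') := by
  unfold empLoss empLossPert
  rw [← Finset.sum_erase_add _ _ (Finset.mem_univ j)]
  ring

lemma hessian_empLoss (hC2 : ∀ zz : Z, ContDiff ℝ 2 (fun θ => ℓ θ zz))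
    (θ : EuclideanSpace ℝ (Fin d)) :
    hessian (empLoss ℓ z) θ = empHess ℓ z θ :=
  hessian_const_mul_sum Finset.univ (fun i x => ℓ x (z i)) (fun i => hC2 (z i)) (1 / (n : ℝ)) θ

lemma contDiff_empLoss (hC2 : ∀ zz : Z, ContDiff ℝ 2 (fun θ => ℓ θ zz)) :
    ContDiff ℝ 2 (empLoss ℓ z) :=
  contDiff_const.mul (ContDiff.sum fun i _ => hC2 (z i))

end transfer


set_option maxHeartbeats 2000000 in
/-- Under strong convexity of both empirical losses, the pointwise Lipschitz bounds on the
swapped losses, the `M`-Lipschitzness of the per-sample Hessians between the two minimizers,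
and the `B`-bound on the Hessians at the swapped points, the empirical Hessians `H(θ̂)` and
`H′(θ̂′)` are both invertible and `‖H′(θ̂′)⁻¹ - H(θ̂)⁻¹‖_op ≤ (4LM + 2Bm)/(m³n)`. -/
theorem stmt_7 {d n : ℕ} (hn : 1 ≤ n) {Z : Type*} (z : Fin n → Z) (j : Fin n) (z' : Z)
    (ℓ : EuclideanSpace ℝ (Fin d) → Z → ℝ)
    (hC2 : ∀ zz : Z, ContDiff ℝ 2 (fun θ => ℓ θ zz))
    (m L M B : ℝ) (hm : 0 < m) (hL : 0 < L) (hM : 0 < M) (hB : 0 < B)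
    (θhat θhat' : EuclideanSpace ℝ (Fin d))
    (hsc : StrongConvexOnUniv m (empLoss ℓ z))
    (hsc' : StrongConvexOnUniv m (empLossPert ℓ z j z'))
    (hmin : ∀ θ, empLoss ℓ z θhat ≤ empLoss ℓ z θ)
    (hmin' : ∀ θ, empLossPert ℓ z j z' θhat' ≤ empLossPert ℓ z j z' θ)
    (hlip₁ : |ℓ θhat' (z j) - ℓ θhat (z j)| ≤ L * ‖θhat' - θhat‖)
    (hlip₂ : |ℓ θhat z' - ℓ θhat' z'| ≤ L * ‖θhat' - θhat‖)
    (hhessLip : ∀ i : Fin n,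
      ‖hessian (fun θ' => ℓ θ' (z i)) θhat' - hessian (fun θ' => ℓ θ' (z i)) θhat‖ ≤
        M * ‖θhat' - θhat‖)
    (hhessB₁ : ‖hessian (fun θ' => ℓ θ' (z j)) θhat'‖ ≤ B)
    (hhessB₂ : ‖hessian (fun θ' => ℓ θ' z') θhat'‖ ≤ B) :
    IsUnit (empHess ℓ z θhat) ∧ IsUnit (empHessPert ℓ z j z' θhat') ∧
      ‖Ring.inverse (empHessPert ℓ z j z' θhat') - Ring.inverse (empHess ℓ z θhat)‖ ≤
        (4 * L * M + 2 * B * m) / (m ^ 3 * n) := by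
  have hn' : (0:ℝ) < n := by exact_mod_cast hn
  set w : Fin n → Z := Function.update z j z' with hw
  set A : _ →L[ℝ] _ := empHess ℓ z θhat with hA
  set A' : _ →L[ℝ] _ := empHessPert ℓ z j z' θhat' with hA'
  -- coercivity and invertibility
  have hcoA : ∀ v, m * ‖v‖ ^ 2 ≤ ⟪A v, v⟫ := by
    intro v
    rw [hA, ← hessian_empLoss ℓ z hC2]
    exact hess_lower (contDiff_empLoss ℓ z hC2) hsc θhat v
  have hcoA' : ∀ v, m * ‖v‖ ^ 2 ≤ ⟪A' v, v⟫ := by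
    intro v
    rw [hA', empHessPert_eq, ← hessian_empLoss ℓ w hC2]
    exact hess_lower (contDiff_empLoss ℓ w hC2)
      (by rwa [empLossPert_eq] at hsc') θhat' v
  obtain ⟨huA, hiA⟩ := coercive_isUnit hm A hcoA
  obtain ⟨huA', hiA'⟩ := coercive_isUnit hm A' hcoA'
  refine ⟨huA, huA', ?_⟩
  set δ : ℝ := ‖θhat' - θhat‖ with hδ
  have hδ0 : 0 ≤ δ := norm_nonneg _
  -- distance bound
  have hdist : δ ≤ 2 * L / (m * n) := by
    have hd1 := strong_min hsc hmin θhat'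
    have hd2 := strong_min hsc' hmin' θhat
    rw [norm_sub_rev θhat θhat'] at hd2
    have hkey : m * δ ^ 2 ≤ (1 / (n : ℝ)) * (2 * L * δ) := by
      have e1 := empLoss_sub_pert ℓ z j z' θhat'
      have e2 := empLoss_sub_pert ℓ z j z' θhat
      have b1 : ℓ θhat' (z j) - ℓ θhat (z j) ≤ L * δ := (abs_le.1 hlip₁).2
      have b2 : ℓ θhat z' - ℓ θhat' z' ≤ L * δ := (abs_le.1 hlip₂).2
      have hinv : (0:ℝ) < 1 / (n:ℝ) := by positivity
      nlinarith [mul_le_mul_of_nonneg_left b1 hinv.le, mul_le_mul_of_nonneg_left b2 hinv.le]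
    rcases eq_or_lt_of_le hδ0 with h0 | h0
    · rw [← h0]; positivity
    · have h1 : m * δ * n ≤ 2 * L := by
        have h2 : (m * δ * n) * δ ≤ (2 * L) * δ := by
          calc (m * δ * n) * δ = (n:ℝ) * (m * δ ^ 2) := by ring
            _ ≤ (n:ℝ) * ((1 / n) * (2 * L * δ)) := mul_le_mul_of_nonneg_left hkey hn'.le
            _ = 2 * L * δ := by field_simp
        exact le_of_mul_le_mul_right h2 h0
      rw [le_div_iff₀ (by positivity : (0:ℝ) < m * (n:ℝ))]
      linarith
  -- Hessian difference bound
  have hdiff : ‖A - A'‖ ≤ M * δ + 2 * B / n := by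
    have hsplit : A - A' = (1 / (n : ℝ)) •
        ((∑ i ∈ Finset.univ.erase j,
            (hessian (fun θ' => ℓ θ' (z i)) θhat - hessian (fun θ' => ℓ θ' (z i)) θhat')) +
          (hessian (fun θ' => ℓ θ' (z j)) θhat - hessian (fun θ' => ℓ θ' z') θhat')) := by
      rw [hA, hA']
      unfold empHess empHessPert
      rw [← Finset.sum_erase_add _ _ (Finset.mem_univ j), Finset.sum_sub_distrib]
      simp only [smul_add, smul_sub]
      abel
    have hterm : ∀ i ∈ Finset.univ.erase j,
        ‖hessian (fun θ' => ℓ θ' (z i)) θhat - hessian (fun θ' => ℓ θ' (z i)) θhat'‖ ≤ M * δ := by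
      intro i _
      rw [norm_sub_rev]
      exact hhessLip i
    have hsum : ‖∑ i ∈ Finset.univ.erase j,
        (hessian (fun θ' => ℓ θ' (z i)) θhat - hessian (fun θ' => ℓ θ' (z i)) θhat')‖
        ≤ ((n : ℝ) - 1) * (M * δ) := by
      refine (norm_sum_le_of_le _ hterm).trans_eq ?_
      rw [Finset.sum_const, Finset.card_erase_of_mem (Finset.mem_univ j), Finset.card_univ,
        Fintype.card_fin, nsmul_eq_mul, Nat.cast_sub hn, Nat.cast_one]
    have hlast : ‖hessian (fun θ' => ℓ θ' (z j)) θhat - hessian (fun θ' => ℓ θ' z') θhat'‖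
        ≤ M * δ + 2 * B := by
      calc ‖hessian (fun θ' => ℓ θ' (z j)) θhat - hessian (fun θ' => ℓ θ' z') θhat'‖
          ≤ ‖hessian (fun θ' => ℓ θ' (z j)) θhat - hessian (fun θ' => ℓ θ' (z j)) θhat'‖ +
            ‖hessian (fun θ' => ℓ θ' (z j)) θhat' - hessian (fun θ' => ℓ θ' z') θhat'‖ :=
            norm_sub_le_norm_sub_add_norm_sub _ _ _
        _ ≤ M * δ + (B + B) := by
            gcongr
            · rw [norm_sub_rev]; exact hhessLip j
            · exact (norm_sub_le _ _).trans (by gcongr)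
        _ = M * δ + 2 * B := by ring
    rw [hsplit]
    refine le_trans (ContinuousLinearMap.opNorm_smul_le _ _) ?_
    rw [Real.norm_eq_abs, abs_of_pos (by positivity : (0:ℝ) < 1 / (n:ℝ))]
    refine le_trans (mul_le_mul_of_nonneg_left
      ((norm_add_le _ _).trans (add_le_add hsum hlast)) (by positivity)) (le_of_eq ?_)
    field_simp
    ring
  -- resolvent identity
  have hres : Ring.inverse A' - Ring.inverse A = Ring.inverse A' * (A - A') * Ring.inverse A := by
    rw [mul_sub, sub_mul, mul_assoc, Ring.mul_inverse_cancel A huA, mul_one,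
      Ring.inverse_mul_cancel A' huA', one_mul]
  have hnorm : ‖Ring.inverse A' - Ring.inverse A‖ ≤ (1 / m) * (M * δ + 2 * B / n) * (1 / m) := by
    rw [hres]
    calc ‖Ring.inverse A' * (A - A') * Ring.inverse A‖
        ≤ ‖Ring.inverse A' * (A - A')‖ * ‖Ring.inverse A‖ := norm_mul_le _ _
      _ ≤ ‖Ring.inverse A'‖ * ‖A - A'‖ * ‖Ring.inverse A‖ :=
          mul_le_mul_of_nonneg_right (norm_mul_le _ _) (norm_nonneg _)
      _ ≤ (1 / m) * (M * δ + 2 * B / n) * (1 / m) := by gcongr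
  refine hnorm.trans ?_
  have hδM : M * δ ≤ M * (2 * L / (m * n)) := by gcongr
  calc (1 / m) * (M * δ + 2 * B / n) * (1 / m)
      ≤ (1 / m) * (M * (2 * L / (m * n)) + 2 * B / n) * (1 / m) := by gcongr
    _ = (2 * L * M + 2 * B * m) / (m ^ 3 * n) := by field_simp
    _ ≤ (4 * L * M + 2 * B * m) / (m ^ 3 * n) := by gcongr ?_ / ?_ <;> nlinarith
end
end

section
/- Let θ̂ minimize the original empirical loss ℓ̂ and θ̂′ minimize the perturbed empirical loss ℓ̂′ over ℝ^d. Fix a test point z_test and an index i ≠ j, and assume: (i) ℓ̂ and ℓ̂′ are m-strongly convex (m > 0); (ii) |ℓ(θ̂′, z) − ℓ(θ̂, z)| ≤ L‖θ̂′ − θ̂‖₂ for z ∈ {z_j, z_j′} with L > 0; (iii) for every k ∈ {1,…,n}, ‖∇²_θℓ(θ̂′, z_k) − ∇²_θℓ(θ̂, z_k)‖_op ≤ M‖θ̂′ − θ̂‖₂ with M > 0, and ‖∇²_θℓ(θ̂′, z_j)‖_op ≤ B, ‖∇²_θℓ(θ̂′, z_j′)‖_op ≤ B with B > 0; (iv)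 ‖∇_θℓ(θ, z)‖₂ ≤ G for θ ∈ {θ̂, θ̂′} and z ∈ {z_test, z_i} with G > 0; and (v) ‖∇_θℓ(θ̂′, z) − ∇_θℓ(θ̂, z)‖₂ ≤ S‖θ̂′ − θ̂‖₂ for z ∈ {z_test, z_i} with S > 0. Then the influence scores of the unperturbed training point z_i on z_test before and after the perturbation satisfy |τ′(z_i, z_test; θ̂′) − τ(z_i, z_test; θ̂)| ≤ (8GLSm + 4G²LM + 2G²Bm)/(m³ n); in particular the difference is O(1/n). -/
open scoped RealInnerProductSpace

noncomputable section

/-- The influence-function score of a training point `ztr` on a test point `ztest` for the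
original dataset: `τ(ztr, ztest; θ) = -∇_θℓ(θ, ztest)ᵀ H(θ)⁻¹ ∇_θℓ(θ, ztr)`. -/
def tauIF {d n : ℕ} {Z : Type*} (ℓ : EuclideanSpace ℝ (Fin d) → Z → ℝ)
    (z : Fin n → Z) (ztr ztest : Z) (θ : EuclideanSpace ℝ (Fin d)) : ℝ :=
  -⟪gradient (fun θ' => ℓ θ' ztest) θ,
    Ring.inverse (empHess ℓ z θ) (gradient (fun θ' => ℓ θ' ztr) θ)⟫

/-- The influence-function score of a training point `ztr` on a test point `ztest` for the
perturbed dataset: `τ′(ztr, ztest; θ) = -∇_θℓ(θ, ztest)ᵀ H′(θ)⁻¹ ∇_θℓ(θ, ztr)`. -/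
def tauIFPert {d n : ℕ} {Z : Type*} (ℓ : EuclideanSpace ℝ (Fin d) → Z → ℝ)
    (z : Fin n → Z) (j : Fin n) (z' : Z) (ztr ztest : Z)
    (θ : EuclideanSpace ℝ (Fin d)) : ℝ :=
  -⟪gradient (fun θ' => ℓ θ' ztest) θ,
    Ring.inverse (empHessPert ℓ z j z' θ) (gradient (fun θ' => ℓ θ' ztr) θ)⟫


/-! ### Auxiliary lemmas -/

section AuxLemmas
variable {d : ℕ}

lemma aux_inner_gradient (f : EuclideanSpace ℝ (Fin d) → ℝ) (x v : EuclideanSpace ℝ (Fin d)) :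
    ⟪gradient f x, v⟫ = fderiv ℝ f x v :=
  InnerProductSpace.toDual_symm_apply

lemma aux_convex_le {f : EuclideanSpace ℝ (Fin d) → ℝ} (hf : ConvexOn ℝ Set.univ f)
    {x y : EuclideanSpace ℝ (Fin d)} {f' : EuclideanSpace ℝ (Fin d) →L[ℝ] ℝ}
    (hd : HasFDerivAt f f' x) : f' (y - x) ≤ f y - f x := by
  have h1 : HasDerivAt (fun t : ℝ => x + t • (y - x)) (y - x) 0 := by
    simpa using ((hasDerivAt_id (0:ℝ)).smul_const (y - x)).const_add x
  have hline : HasDerivAt (fun t : ℝ => f (x + t • (y - x))) (f' (y - x)) 0 := by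
    have hd0 : HasFDerivAt f f' (x + (0:ℝ) • (y - x)) := by simpa using hd
    exact hd0.comp_hasDerivAt (0:ℝ) h1
  have htend : Filter.Tendsto (slope (fun t : ℝ => f (x + t • (y - x))) 0)
      (nhdsWithin 0 (Set.Ioi 0)) (nhds (f' (y - x))) :=
    (hasDerivAt_iff_tendsto_slope.1 hline).mono_left
      (nhdsWithin_mono 0 (fun t ht => ne_of_gt ht))
  refine le_of_tendsto htend ?_
  filter_upwards [Ioc_mem_nhdsGT_of_mem (by norm_num : (0:ℝ) ∈ Set.Ico 0 1)] with t ht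
  have ht0 : 0 < t := ht.1
  have ht1 : t ≤ 1 := ht.2
  have hconv := hf.2 (Set.mem_univ x) (Set.mem_univ y) (by linarith : (0:ℝ) ≤ 1 - t)
    (le_of_lt ht0) (by ring)
  have hx : (1 - t) • x + t • y = x + t • (y - x) := by
    rw [smul_sub, sub_smul, one_smul]; abel
  rw [hx] at hconv
  rw [slope_def_field]
  simp only [sub_zero, zero_smul, add_zero, smul_eq_mul] at *
  rw [div_le_iff₀ ht0]
  nlinarith [hconv]

lemma aux_g_deriv {f : EuclideanSpace ℝ (Fin d) → ℝ} (hf : Differentiable ℝ f) (m : ℝ)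
    (x : EuclideanSpace ℝ (Fin d)) :
    HasFDerivAt (fun x => f x - m / 2 * ‖x‖ ^ 2)
      (fderiv ℝ f x - m • innerSL ℝ x) x := by
  have h2 : HasFDerivAt (fun x : EuclideanSpace ℝ (Fin d) => ‖x‖ ^ 2) (2 • innerSL ℝ x) x :=
    (hasStrictFDerivAt_norm_sq x).hasFDerivAt
  have h3 := (hf x).hasFDerivAt.fun_sub (h2.const_mul (m / 2))
  refine h3.congr_fderiv ?_
  ext v
  simp [two_smul]
  ring

lemma aux_mono {f : EuclideanSpace ℝ (Fin d) → ℝ} {m : ℝ} (hf : Differentiable ℝ f)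
    (hsc : StrongConvexOnUniv m f) (x y : EuclideanSpace ℝ (Fin d)) :
    m * ‖y - x‖ ^ 2 ≤ ⟪gradient f y - gradient f x, y - x⟫ := by
  have h1 := aux_convex_le hsc (aux_g_deriv hf m x) (y := y)
  have h2 := aux_convex_le hsc (aux_g_deriv hf m y) (y := x)
  simp only [ContinuousLinearMap.sub_apply, ContinuousLinearMap.smul_apply, innerSL_apply_apply,
    smul_eq_mul] at h1 h2
  have e1 : fderiv ℝ f y (x - y) = -(fderiv ℝ f y (y - x)) := by
    rw [← map_neg]; congr 1; abel
  have e2 : (⟪y, x - y⟫ : ℝ) = -⟪y, y - x⟫ := by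
    rw [← inner_neg_right]; congr 1; abel
  rw [e1, e2] at h2
  have e3 : (⟪y, y - x⟫ : ℝ) - ⟪x, y - x⟫ = ‖y - x‖ ^ 2 := by
    rw [← inner_sub_left, real_inner_self_eq_norm_sq]
  have e4 : m * (⟪y, y - x⟫ - ⟪x, y - x⟫) = m * ‖y - x‖ ^ 2 := by rw [e3]
  rw [inner_sub_left, aux_inner_gradient, aux_inner_gradient]
  linarith [h1, h2, e4]

lemma aux_min_lb {f : EuclideanSpace ℝ (Fin d) → ℝ} {m : ℝ} (hf : Differentiable ℝ f)
    (hsc : StrongConvexOnUniv m f) {θ : EuclideanSpace ℝ (Fin d)}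
    (hmin : ∀ x, f θ ≤ f x) (x : EuclideanSpace ℝ (Fin d)) :
    m / 2 * ‖x - θ‖ ^ 2 ≤ f x - f θ := by
  have h1 := aux_convex_le hsc (aux_g_deriv hf m θ) (y := x)
  have hloc : IsLocalMin f θ := Filter.Eventually.of_forall hmin
  have hz : fderiv ℝ f θ = 0 := hloc.fderiv_eq_zero
  simp only [ContinuousLinearMap.sub_apply, ContinuousLinearMap.smul_apply, innerSL_apply_apply,
    smul_eq_mul, hz, ContinuousLinearMap.zero_apply, zero_sub,
    ContinuousLinearMap.neg_apply] at h1
  have e3 : (⟪θ, x - θ⟫ : ℝ) = ⟪θ, x⟫ - ‖θ‖ ^ 2 := by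
    rw [inner_sub_right, real_inner_self_eq_norm_sq]
  have e5 : ‖x - θ‖ ^ 2 = ‖x‖ ^ 2 - 2 * ⟪θ, x⟫ + ‖θ‖ ^ 2 := by
    rw [← real_inner_self_eq_norm_sq, inner_sub_sub_self, real_inner_self_eq_norm_sq,
      real_inner_self_eq_norm_sq, real_inner_comm]
    ring
  rw [e3] at h1
  rw [e5]
  linarith [h1]

lemma aux_grad_diff {f : EuclideanSpace ℝ (Fin d) → ℝ} (hf : ContDiff ℝ 2 f) :
    Differentiable ℝ (gradient f) := by
  have h1 : ContDiff ℝ 1 (fderiv ℝ f) := hf.fderiv_right (by norm_num)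
  have h2 : Differentiable ℝ (fderiv ℝ f) := h1.differentiable (by norm_num)
  exact ((InnerProductSpace.toDual ℝ
    (EuclideanSpace ℝ (Fin d))).symm.toContinuousLinearEquiv.differentiable).comp h2

lemma aux_hasFDerivAt_gradient {f : EuclideanSpace ℝ (Fin d) → ℝ} (hf : ContDiff ℝ 2 f)
    (θ : EuclideanSpace ℝ (Fin d)) : HasFDerivAt (gradient f) (hessian f θ) θ :=
  (aux_grad_diff hf θ).hasFDerivAt

lemma aux_hess_lb {f : EuclideanSpace ℝ (Fin d) → ℝ} {m : ℝ} (hf : ContDiff ℝ 2 f)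
    (hsc : StrongConvexOnUniv m f) (θ v : EuclideanSpace ℝ (Fin d)) :
    m * ‖v‖ ^ 2 ≤ ⟪hessian f θ v, v⟫ := by
  have h1 : HasDerivAt (fun t : ℝ => θ + t • v) v 0 := by
    simpa using ((hasDerivAt_id (0:ℝ)).smul_const v).const_add θ
  have hd0 : HasFDerivAt (gradient f) (hessian f θ) (θ + (0:ℝ) • v) := by
    simpa using aux_hasFDerivAt_gradient hf θ
  have hline : HasDerivAt (fun t : ℝ => gradient f (θ + t • v)) (hessian f θ v) 0 := by
    exact hd0.comp_hasDerivAt (0:ℝ) h1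
  have htend : Filter.Tendsto (slope (fun t : ℝ => gradient f (θ + t • v)) 0)
      (nhdsWithin 0 (Set.Ioi 0)) (nhds (hessian f θ v)) :=
    (hasDerivAt_iff_tendsto_slope.1 hline).mono_left
      (nhdsWithin_mono 0 (fun t ht => ne_of_gt ht))
  have htend2 : Filter.Tendsto
      (fun t : ℝ => (⟪slope (fun t : ℝ => gradient f (θ + t • v)) 0 t, v⟫ : ℝ))
      (nhdsWithin 0 (Set.Ioi 0)) (nhds (⟪hessian f θ v, v⟫ : ℝ)) :=
    htend.inner tendsto_const_nhds
  refine ge_of_tendsto htend2 ?_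
  filter_upwards [self_mem_nhdsWithin] with t ht
  have ht0 : (0:ℝ) < t := ht
  have hm := aux_mono (hf.differentiable (by norm_num)) hsc θ (θ + t • v)
  have he : θ + t • v - θ = t • v := by abel
  rw [he] at hm
  have hs : slope (fun t : ℝ => gradient f (θ + t • v)) 0 t
      = t⁻¹ • (gradient f (θ + t • v) - gradient f θ) := by
    simp [slope, vsub_eq_sub]
  rw [hs, real_inner_smul_left]
  rw [norm_smul, inner_smul_right] at hm
  simp only [Real.norm_eq_abs, abs_of_pos ht0, mul_pow] at hm
  set X : ℝ := ⟪gradient f (θ + t • v) - gradient f θ, v⟫ with hXdef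
  have h' : t * (m * t * ‖v‖ ^ 2) ≤ t * X := by nlinarith [hm]
  have hX : m * t * ‖v‖ ^ 2 ≤ X := le_of_mul_le_mul_left h' ht0
  have he2 : m * ‖v‖ ^ 2 = t⁻¹ * (m * t * ‖v‖ ^ 2) := by
    field_simp
  rw [he2]
  exact mul_le_mul_of_nonneg_left hX (inv_nonneg.mpr ht0.le)

lemma aux_inv {A : EuclideanSpace ℝ (Fin d) →L[ℝ] EuclideanSpace ℝ (Fin d)} {m : ℝ}
    (hm : 0 < m) (hA : ∀ v, m * ‖v‖ ^ 2 ≤ ⟪A v, v⟫) :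
    (∀ w, A (Ring.inverse A w) = w) ∧ (∀ w, Ring.inverse A (A w) = w) ∧
      ∀ w, ‖Ring.inverse A w‖ ≤ m⁻¹ * ‖w‖ := by
  have hlow : ∀ v, m * ‖v‖ ≤ ‖A v‖ := by
    intro v
    rcases eq_or_ne v 0 with rfl | hv
    · simp
    · have h1 := hA v
      have h2 : (⟪A v, v⟫ : ℝ) ≤ ‖A v‖ * ‖v‖ := real_inner_le_norm _ _
      have hv0 : 0 < ‖v‖ := norm_pos_iff.mpr hv
      nlinarith
  have hinj : Function.Injective A := by
    intro a b hab
    have h := hlow (a - b)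
    rw [map_sub, hab, sub_self, norm_zero] at h
    have h0 : ‖a - b‖ ≤ 0 := by nlinarith [norm_nonneg (a - b)]
    exact sub_eq_zero.mp (norm_eq_zero.mp (le_antisymm h0 (norm_nonneg _)))
  have hbij : Function.Bijective A :=
    ⟨hinj, LinearMap.injective_iff_surjective.mp hinj⟩
  have hu : IsUnit A := ContinuousLinearMap.isUnit_iff_bijective.mpr hbij
  have h1 : A * Ring.inverse A = 1 := Ring.mul_inverse_cancel A hu
  have h2 : Ring.inverse A * A = 1 := Ring.inverse_mul_cancel A hu
  have key1 : ∀ w, A (Ring.inverse A w) = w := by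
    intro w
    have := congrArg
      (fun T : EuclideanSpace ℝ (Fin d) →L[ℝ] EuclideanSpace ℝ (Fin d) => T w) h1
    simpa [ContinuousLinearMap.mul_apply] using this
  refine ⟨key1, fun w => ?_, fun w => ?_⟩
  · have := congrArg
      (fun T : EuclideanSpace ℝ (Fin d) →L[ℝ] EuclideanSpace ℝ (Fin d) => T w) h2
    simpa [ContinuousLinearMap.mul_apply] using this
  · have h := hlow (Ring.inverse A w)
    rw [key1 w] at h
    have hx : m⁻¹ * (m * ‖Ring.inverse A w‖) = ‖Ring.inverse A w‖ := by
      field_simp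
    calc ‖Ring.inverse A w‖ = m⁻¹ * (m * ‖Ring.inverse A w‖) := hx.symm
      _ ≤ m⁻¹ * ‖w‖ := mul_le_mul_of_nonneg_left h (inv_nonneg.mpr hm.le)

lemma aux_grad_comb {n : ℕ} {Z : Type*} (ℓ : EuclideanSpace ℝ (Fin d) → Z → ℝ)
    (hC2 : ∀ zz : Z, ContDiff ℝ 2 (fun θ => ℓ θ zz)) (s : Finset (Fin n)) (z : Fin n → Z)
    (x : EuclideanSpace ℝ (Fin d)) (c : ℝ) :
    gradient (fun x => c * ∑ i ∈ s, ℓ x (z i)) x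
      = c • ∑ i ∈ s, gradient (fun θ' => ℓ θ' (z i)) x := by
  have hs : HasFDerivAt (fun x => ∑ i ∈ s, ℓ x (z i))
      (∑ i ∈ s, fderiv ℝ (fun θ' => ℓ θ' (z i)) x) x :=
    HasFDerivAt.fun_sum (fun i _ =>
      (((hC2 (z i)).differentiable (by norm_num)) x).hasFDerivAt)
  have h2 := hs.const_mul c
  have h3 := h2.hasGradientAt.gradient
  rw [h3]
  rw [map_smul, map_sum]
  rfl

lemma aux_hess_comb {n : ℕ} {Z : Type*} (ℓ : EuclideanSpace ℝ (Fin d) → Z → ℝ)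
    (hC2 : ∀ zz : Z, ContDiff ℝ 2 (fun θ => ℓ θ zz)) (s : Finset (Fin n)) (z : Fin n → Z)
    (θ : EuclideanSpace ℝ (Fin d)) (c : ℝ) :
    hessian (fun x => c * ∑ i ∈ s, ℓ x (z i)) θ
      = c • ∑ i ∈ s, hessian (fun θ' => ℓ θ' (z i)) θ := by
  unfold hessian
  have hgrad : (fun x => gradient (fun x => c * ∑ i ∈ s, ℓ x (z i)) x)
      = fun x => c • ∑ i ∈ s, gradient (fun θ' => ℓ θ' (z i)) x :=
    funext (fun x => aux_grad_comb ℓ hC2 s z x c)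
  rw [hgrad]
  have hdiff : ∀ i ∈ s, DifferentiableAt ℝ (fun x => gradient (fun θ' => ℓ θ' (z i)) x) θ :=
    fun i _ => aux_grad_diff (hC2 (z i)) θ
  rw [fderiv_fun_const_smul (by exact DifferentiableAt.fun_sum hdiff) c, fderiv_fun_sum hdiff]

lemma aux_contDiff_pert {n : ℕ} {Z : Type*} (ℓ : EuclideanSpace ℝ (Fin d) → Z → ℝ)
    (z : Fin n → Z) (j : Fin n) (z' : Z)
    (hC2 : ∀ zz : Z, ContDiff ℝ 2 (fun θ => ℓ θ zz)) :
    ContDiff ℝ 2 (empLossPert ℓ z j z') := by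
  unfold empLossPert
  exact (contDiff_const.mul (ContDiff.sum fun i _ => hC2 (z i))).add
    (contDiff_const.mul (hC2 z'))

lemma aux_grad_pert {n : ℕ} {Z : Type*} (ℓ : EuclideanSpace ℝ (Fin d) → Z → ℝ)
    (z : Fin n → Z) (j : Fin n) (z' : Z)
    (hC2 : ∀ zz : Z, ContDiff ℝ 2 (fun θ => ℓ θ zz)) (x : EuclideanSpace ℝ (Fin d)) :
    gradient (empLossPert ℓ z j z') x
      = (1 / (n : ℝ)) • ∑ i ∈ Finset.univ.erase j, gradient (fun θ' => ℓ θ' (z i)) x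
        + (1 / (n : ℝ)) • gradient (fun θ' => ℓ θ' z') x := by
  have hs : HasFDerivAt (fun x => ∑ i ∈ Finset.univ.erase j, ℓ x (z i))
      (∑ i ∈ Finset.univ.erase j, fderiv ℝ (fun θ' => ℓ θ' (z i)) x) x :=
    HasFDerivAt.fun_sum (fun i _ =>
      (((hC2 (z i)).differentiable (by norm_num)) x).hasFDerivAt)
  have hz' : HasFDerivAt (fun x => ℓ x z') (fderiv ℝ (fun θ' => ℓ θ' z') x) x :=
    (((hC2 z').differentiable (by norm_num)) x).hasFDerivAt
  have h2 := (hs.const_mul (1 / (n : ℝ))).fun_add (hz'.const_mul (1 / (n : ℝ)))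
  have h3 := h2.hasGradientAt.gradient
  rw [show empLossPert ℓ z j z' = fun x => (1 / (n : ℝ)) * ∑ i ∈ Finset.univ.erase j, ℓ x (z i)
    + (1 / (n : ℝ)) * ℓ x z' from rfl, h3]
  rw [map_add, map_smul, map_smul, map_sum]
  rfl

lemma aux_hess_pert {n : ℕ} {Z : Type*} (ℓ : EuclideanSpace ℝ (Fin d) → Z → ℝ)
    (z : Fin n → Z) (j : Fin n) (z' : Z)
    (hC2 : ∀ zz : Z, ContDiff ℝ 2 (fun θ => ℓ θ zz)) (θ : EuclideanSpace ℝ (Fin d)) :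
    hessian (empLossPert ℓ z j z') θ = empHessPert ℓ z j z' θ := by
  unfold hessian empHessPert
  have hgrad : (fun x => gradient (empLossPert ℓ z j z') x)
      = fun x => (1 / (n : ℝ)) • ∑ i ∈ Finset.univ.erase j, gradient (fun θ' => ℓ θ' (z i)) x
        + (1 / (n : ℝ)) • gradient (fun θ' => ℓ θ' z') x :=
    funext (fun x => aux_grad_pert ℓ z j z' hC2 x)
  rw [hgrad]
  have hdiff : ∀ i ∈ Finset.univ.erase j,
      DifferentiableAt ℝ (fun x => gradient (fun θ' => ℓ θ' (z i)) x) θ :=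
    fun i _ => aux_grad_diff (hC2 (z i)) θ
  have hdsum : DifferentiableAt ℝ
      (fun x => ∑ i ∈ Finset.univ.erase j, gradient (fun θ' => ℓ θ' (z i)) x) θ :=
    DifferentiableAt.fun_sum hdiff
  have hdz' : DifferentiableAt ℝ (fun x => gradient (fun θ' => ℓ θ' z') x) θ :=
    aux_grad_diff (hC2 z') θ
  rw [fderiv_fun_add (hdsum.fun_const_smul _) (hdz'.fun_const_smul _),
    fderiv_fun_const_smul hdsum _, fderiv_fun_const_smul hdz' _, fderiv_fun_sum hdiff]
  rfl

end AuxLemmas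

set_option maxHeartbeats 4000000 in
set_option synthInstance.maxHeartbeats 400000 in
/-- Influence-score stability for an unperturbed training point `z i`, `i ≠ j`: under
strong convexity of both empirical losses, Lipschitz bounds on the swapped losses,
`M`-Lipschitzness and `B`-boundedness of the per-sample Hessians, and `G`-boundedness and
`S`-Lipschitzness of the relevant gradients, the influence scores before and after the
perturbation satisfy
`|τ′(zᵢ, z_test; θ̂′) - τ(zᵢ, z_test; θ̂)| ≤ (8GLSm + 4G²LM + 2G²Bm)/(m³n) = O(1/n)`. -/
theorem stmt_9 {d n : ℕ} (hn : 1 ≤ n) {Z : Type*} (z : Fin n → Z) (i j : Fin n)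
    (hij : i ≠ j) (z' : Z) (ztest : Z)
    (ℓ : EuclideanSpace ℝ (Fin d) → Z → ℝ)
    (hC2 : ∀ zz : Z, ContDiff ℝ 2 (fun θ => ℓ θ zz))
    (m L M B G S : ℝ) (hm : 0 < m) (hL : 0 < L) (hM : 0 < M) (hB : 0 < B)
    (hG : 0 < G) (hS : 0 < S)
    (θhat θhat' : EuclideanSpace ℝ (Fin d))
    (hsc : StrongConvexOnUniv m (empLoss ℓ z))
    (hsc' : StrongConvexOnUniv m (empLossPert ℓ z j z'))
    (hmin : ∀ θ, empLoss ℓ z θhat ≤ empLoss ℓ z θ)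
    (hmin' : ∀ θ, empLossPert ℓ z j z' θhat' ≤ empLossPert ℓ z j z' θ)
    (hlip₁ : |ℓ θhat' (z j) - ℓ θhat (z j)| ≤ L * ‖θhat' - θhat‖)
    (hlip₂ : |ℓ θhat z' - ℓ θhat' z'| ≤ L * ‖θhat' - θhat‖)
    (hhessLip : ∀ k : Fin n,
      ‖hessian (fun θ' => ℓ θ' (z k)) θhat' - hessian (fun θ' => ℓ θ' (z k)) θhat‖ ≤
        M * ‖θhat' - θhat‖)
    (hhessB₁ : ‖hessian (fun θ' => ℓ θ' (z j)) θhat'‖ ≤ B)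
    (hhessB₂ : ‖hessian (fun θ' => ℓ θ' z') θhat'‖ ≤ B)
    (hgradB₁ : ‖gradient (fun θ' => ℓ θ' ztest) θhat‖ ≤ G)
    (hgradB₂ : ‖gradient (fun θ' => ℓ θ' ztest) θhat'‖ ≤ G)
    (hgradB₃ : ‖gradient (fun θ' => ℓ θ' (z i)) θhat‖ ≤ G)
    (hgradB₄ : ‖gradient (fun θ' => ℓ θ' (z i)) θhat'‖ ≤ G)
    (hgradLip₁ : ‖gradient (fun θ' => ℓ θ' ztest) θhat' -
        gradient (fun θ' => ℓ θ' ztest) θhat‖ ≤ S * ‖θhat' - θhat‖)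
    (hgradLip₂ : ‖gradient (fun θ' => ℓ θ' (z i)) θhat' -
        gradient (fun θ' => ℓ θ' (z i)) θhat‖ ≤ S * ‖θhat' - θhat‖) :
    |tauIFPert ℓ z j z' (z i) ztest θhat' - tauIF ℓ z (z i) ztest θhat| ≤
      (8 * G * L * S * m + 4 * G ^ 2 * L * M + 2 * G ^ 2 * B * m) / (m ^ 3 * n) := by
  classical
  have hn0 : (0:ℝ) < n := by exact_mod_cast Nat.lt_of_lt_of_le Nat.zero_lt_one hn
  have hn1 : (1:ℝ) ≤ n := by exact_mod_cast hn
  -- smoothness of the empirical losses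
  have hC2f : ContDiff ℝ 2 (empLoss ℓ z) := by
    unfold empLoss
    exact contDiff_const.mul (ContDiff.sum fun k _ => hC2 (z k))
  have hC2f' : ContDiff ℝ 2 (empLossPert ℓ z j z') := aux_contDiff_pert ℓ z j z' hC2
  have hdf : Differentiable ℝ (empLoss ℓ z) := hC2f.differentiable (by norm_num)
  have hdf' : Differentiable ℝ (empLossPert ℓ z j z') := hC2f'.differentiable (by norm_num)
  -- Hessian identities
  have hHeq : hessian (empLoss ℓ z) θhat = empHess ℓ z θhat :=
    aux_hess_comb ℓ hC2 Finset.univ z θhat (1 / (n : ℝ))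
  have hHeq' : hessian (empLossPert ℓ z j z') θhat' = empHessPert ℓ z j z' θhat' :=
    aux_hess_pert ℓ z j z' hC2 θhat'
  -- coercivity of the empirical Hessians
  have hlbA : ∀ v, m * ‖v‖ ^ 2 ≤ ⟪empHess ℓ z θhat v, v⟫ := by
    intro v
    rw [← hHeq]
    exact aux_hess_lb hC2f hsc θhat v
  have hlbA' : ∀ v, m * ‖v‖ ^ 2 ≤ ⟪empHessPert ℓ z j z' θhat' v, v⟫ := by
    intro v
    rw [← hHeq']
    exact aux_hess_lb hC2f' hsc' θhat' v
  obtain ⟨hA1, hA2, hA3⟩ := aux_inv hm hlbA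
  obtain ⟨hA'1, hA'2, hA'3⟩ := aux_inv hm hlbA'
  -- parameter stability: ‖θhat' - θhat‖ ≤ 2L/(mn)
  set D := ‖θhat' - θhat‖ with hDdef
  have hD0 : 0 ≤ D := norm_nonneg _
  have hq1 : m / 2 * D ^ 2 ≤ empLoss ℓ z θhat' - empLoss ℓ z θhat :=
    aux_min_lb hdf hsc hmin θhat'
  have hq2 : m / 2 * D ^ 2 ≤ empLossPert ℓ z j z' θhat - empLossPert ℓ z j z' θhat' := by
    have := aux_min_lb hdf' hsc' hmin' θhat
    rwa [norm_sub_rev] at this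
  have hdiffLoss : ∀ θ, empLoss ℓ z θ - empLossPert ℓ z j z' θ
      = (1 / (n : ℝ)) * (ℓ θ (z j) - ℓ θ z') := by
    intro θ
    unfold empLoss empLossPert
    rw [← Finset.add_sum_erase Finset.univ (fun k => ℓ θ (z k)) (Finset.mem_univ j)]
    ring
  have hsum : m * D ^ 2 ≤ (1 / (n : ℝ)) *
      ((ℓ θhat' (z j) - ℓ θhat (z j)) + (ℓ θhat z' - ℓ θhat' z')) := by
    have e1 := hdiffLoss θhat'
    have e2 := hdiffLoss θhat
    have h12 := add_le_add hq1 hq2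
    nlinarith [h12, e1, e2]
  have habs : (ℓ θhat' (z j) - ℓ θhat (z j)) + (ℓ θhat z' - ℓ θhat' z') ≤ 2 * L * D := by
    have h1 := (abs_le.mp hlip₁).2
    have h2 := (abs_le.mp hlip₂).2
    linarith
  have hDle : D ≤ 2 * L / (m * n) := by
    rcases eq_or_lt_of_le hD0 with h0 | h0
    · rw [← h0]
      positivity
    · have h1 : m * D ^ 2 ≤ (1 / (n : ℝ)) * (2 * L * D) :=
        le_trans hsum (mul_le_mul_of_nonneg_left habs (by positivity))
      rw [le_div_iff₀ (by positivity : (0:ℝ) < m * n)]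
      have h2 : (n : ℝ) * (m * D ^ 2) ≤ (n : ℝ) * ((1 / (n : ℝ)) * (2 * L * D)) :=
        mul_le_mul_of_nonneg_left h1 hn0.le
      have h3 : (n : ℝ) * ((1 / (n : ℝ)) * (2 * L * D)) = 2 * L * D := by
        field_simp
      rw [h3] at h2
      have h4 : D * (m * (n : ℝ)) * D ≤ (2 * L) * D := by nlinarith [h2]
      exact le_of_mul_le_mul_right h4 h0
  -- operator norm bound on A' - A
  set A := empHess ℓ z θhat with hAdef
  set A' := empHessPert ℓ z j z' θhat' with hA'def
  have hAAeq : A' - A = (1 / (n : ℝ)) • (∑ k ∈ Finset.univ.erase j,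
        (hessian (fun θ' => ℓ θ' (z k)) θhat' - hessian (fun θ' => ℓ θ' (z k)) θhat))
      + (1 / (n : ℝ)) • (hessian (fun θ' => ℓ θ' z') θhat'
        - hessian (fun θ' => ℓ θ' (z j)) θhat) := by
    rw [hAdef, hA'def]
    unfold empHess empHessPert
    rw [← Finset.add_sum_erase Finset.univ
      (fun k => hessian (fun θ' => ℓ θ' (z k)) θhat) (Finset.mem_univ j)]
    rw [Finset.sum_sub_distrib, smul_sub, smul_sub, smul_add]
    abel
  have hsum_norm : ‖∑ k ∈ Finset.univ.erase j,
      (hessian (fun θ' => ℓ θ' (z k)) θhat' - hessian (fun θ' => ℓ θ' (z k)) θhat)‖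
        ≤ (n : ℝ) * (M * D) := by
    calc ‖∑ k ∈ Finset.univ.erase j,
        (hessian (fun θ' => ℓ θ' (z k)) θhat' - hessian (fun θ' => ℓ θ' (z k)) θhat)‖
        ≤ ∑ k ∈ Finset.univ.erase j,
          ‖hessian (fun θ' => ℓ θ' (z k)) θhat' - hessian (fun θ' => ℓ θ' (z k)) θhat‖ :=
        norm_sum_le _ _
      _ ≤ ∑ _k ∈ Finset.univ.erase j, (M * D) :=
        Finset.sum_le_sum (fun k _ => hhessLip k)
      _ = ((Finset.univ.erase j).card : ℝ) * (M * D) := by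
        rw [Finset.sum_const, nsmul_eq_mul]
      _ ≤ (n : ℝ) * (M * D) := by
        have hcard : ((Finset.univ.erase j).card : ℝ) ≤ (n : ℝ) := by
          have := Finset.card_erase_le (s := (Finset.univ : Finset (Fin n))) (a := j)
          have h2 : (Finset.univ : Finset (Fin n)).card = n := Finset.card_univ.trans (Fintype.card_fin n)
          exact_mod_cast h2 ▸ this
        have hMD : 0 ≤ M * D := by positivity
        exact mul_le_mul_of_nonneg_right hcard hMD
  have hsecond : ‖hessian (fun θ' => ℓ θ' z') θhat' - hessian (fun θ' => ℓ θ' (z j)) θhat‖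
      ≤ 2 * B + M * D := by
    have htj : ‖hessian (fun θ' => ℓ θ' (z j)) θhat‖
        ≤ B + M * D := by
      have h1 : ‖hessian (fun θ' => ℓ θ' (z j)) θhat‖
          ≤ ‖hessian (fun θ' => ℓ θ' (z j)) θhat'‖
            + ‖hessian (fun θ' => ℓ θ' (z j)) θhat' - hessian (fun θ' => ℓ θ' (z j)) θhat‖ := by
        have := norm_sub_le (hessian (fun θ' => ℓ θ' (z j)) θhat')
          (hessian (fun θ' => ℓ θ' (z j)) θhat' - hessian (fun θ' => ℓ θ' (z j)) θhat)
        simpa using this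
      exact h1.trans (add_le_add hhessB₁ (hhessLip j))
    calc ‖hessian (fun θ' => ℓ θ' z') θhat' - hessian (fun θ' => ℓ θ' (z j)) θhat‖
        ≤ ‖hessian (fun θ' => ℓ θ' z') θhat'‖ + ‖hessian (fun θ' => ℓ θ' (z j)) θhat‖ :=
        norm_sub_le _ _
      _ ≤ B + (B + M * D) := add_le_add hhessB₂ htj
      _ = 2 * B + M * D := by ring
  have hAA : ‖A' - A‖ ≤ 2 * M * D + 2 * B / n := by
    have hnn : ‖(1 / (n : ℝ))‖ = 1 / (n : ℝ) := by
      rw [Real.norm_eq_abs, abs_of_pos (by positivity)]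
    have hb : ‖A' - A‖
        ≤ (1 / (n : ℝ)) * ((n : ℝ) * (M * D)) + (1 / (n : ℝ)) * (2 * B + M * D) := by
      rw [hAAeq]
      refine (norm_add_le _ _).trans (add_le_add ?_ ?_)
      · refine (ContinuousLinearMap.opNorm_smul_le (1 / (n : ℝ)) _).trans ?_
        rw [hnn]
        exact mul_le_mul_of_nonneg_left hsum_norm (by positivity)
      · refine (ContinuousLinearMap.opNorm_smul_le (1 / (n : ℝ)) _).trans ?_
        rw [hnn]
        exact mul_le_mul_of_nonneg_left hsecond (by positivity)
    refine hb.trans ?_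
    have h2 : (M * D) / (n : ℝ) ≤ M * D := by
      rw [div_le_iff₀ hn0]
      nlinarith [mul_nonneg (mul_nonneg hM.le hD0) (sub_nonneg.mpr hn1)]
    have heq : (1 / (n : ℝ)) * ((n : ℝ) * (M * D)) + (1 / (n : ℝ)) * (2 * B + M * D)
        = M * D + 2 * B / n + (M * D) / n := by
      field_simp
      ring
    rw [heq]
    linarith
  -- gradient abbreviations
  set u := gradient (fun θ' => ℓ θ' ztest) θhat with hudef
  set u' := gradient (fun θ' => ℓ θ' ztest) θhat' with hu'def
  set v := gradient (fun θ' => ℓ θ' (z i)) θhat with hvdef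
  set v' := gradient (fun θ' => ℓ θ' (z i)) θhat' with hv'def
  set RA := Ring.inverse A with hRAdef
  set RA' := Ring.inverse A' with hRA'def
  -- decomposition of the difference
  have hdecomp : tauIFPert ℓ z j z' (z i) ztest θhat' - tauIF ℓ z (z i) ztest θhat
      = -((⟪u' - u, RA' v'⟫ : ℝ) + ⟪u, RA' (v' - v)⟫ + ⟪u, RA' ((A - A') (RA v))⟫) := by
    have e : RA' ((A - A') (RA v)) = RA' v - RA v := by
      rw [ContinuousLinearMap.sub_apply, map_sub, hA1 v, hA'2 (RA v)]
    have e2 : tauIFPert ℓ z j z' (z i) ztest θhat' = -⟪u', RA' v'⟫ := rfl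
    have e3 : tauIF ℓ z (z i) ztest θhat = -⟪u, RA v⟫ := rfl
    rw [e2, e3, e]
    simp only [inner_sub_left, inner_sub_right, map_sub]
    ring
  rw [hdecomp, abs_neg]
  -- bound the three terms
  have hb1 : |(⟪u' - u, RA' v'⟫ : ℝ)| ≤ (S * D) * (m⁻¹ * G) := by
    refine (abs_real_inner_le_norm _ _).trans ?_
    have hl : ‖u' - u‖ ≤ S * D := hgradLip₁
    have hr : ‖RA' v'‖ ≤ m⁻¹ * G := (hA'3 v').trans
      (mul_le_mul_of_nonneg_left hgradB₄ (inv_nonneg.mpr hm.le))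
    exact mul_le_mul hl hr (norm_nonneg _) (by positivity)
  have hb2 : |(⟪u, RA' (v' - v)⟫ : ℝ)| ≤ G * (m⁻¹ * (S * D)) := by
    refine (abs_real_inner_le_norm _ _).trans ?_
    have hr : ‖RA' (v' - v)‖ ≤ m⁻¹ * (S * D) := (hA'3 (v' - v)).trans
      (mul_le_mul_of_nonneg_left hgradLip₂ (inv_nonneg.mpr hm.le))
    exact mul_le_mul hgradB₁ hr (norm_nonneg _) (by positivity)
  have hb3 : |(⟪u, RA' ((A - A') (RA v))⟫ : ℝ)|
      ≤ G * (m⁻¹ * ((2 * M * D + 2 * B / n) * (m⁻¹ * G))) := by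
    refine (abs_real_inner_le_norm _ _).trans ?_
    have hRv : ‖RA v‖ ≤ m⁻¹ * G := (hA3 v).trans
      (mul_le_mul_of_nonneg_left hgradB₃ (inv_nonneg.mpr hm.le))
    have hAmA : ‖A - A'‖ = ‖A' - A‖ := norm_sub_rev _ _
    have hmid : ‖(A - A') (RA v)‖ ≤ (2 * M * D + 2 * B / n) * (m⁻¹ * G) := by
      calc ‖(A - A') (RA v)‖ ≤ ‖A - A'‖ * ‖RA v‖ := ContinuousLinearMap.le_opNorm _ _
        _ ≤ (2 * M * D + 2 * B / n) * (m⁻¹ * G) := by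
          rw [hAmA]
          exact mul_le_mul hAA hRv (norm_nonneg _) (by positivity)
    have hr : ‖RA' ((A - A') (RA v))‖
        ≤ m⁻¹ * ((2 * M * D + 2 * B / n) * (m⁻¹ * G)) := (hA'3 _).trans
      (mul_le_mul_of_nonneg_left hmid (inv_nonneg.mpr hm.le))
    exact mul_le_mul hgradB₁ hr (norm_nonneg _) (by positivity)
  -- final numeric assembly
  have htriangle : |(⟪u' - u, RA' v'⟫ : ℝ) + ⟪u, RA' (v' - v)⟫ + ⟪u, RA' ((A - A') (RA v))⟫|
      ≤ (S * D) * (m⁻¹ * G) + G * (m⁻¹ * (S * D))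
        + G * (m⁻¹ * ((2 * M * D + 2 * B / n) * (m⁻¹ * G))) := by
    calc |(⟪u' - u, RA' v'⟫ : ℝ) + ⟪u, RA' (v' - v)⟫ + ⟪u, RA' ((A - A') (RA v))⟫|
        ≤ |(⟪u' - u, RA' v'⟫ : ℝ) + ⟪u, RA' (v' - v)⟫| + |(⟪u, RA' ((A - A') (RA v))⟫ : ℝ)| :=
        abs_add_le _ _
      _ ≤ (|(⟪u' - u, RA' v'⟫ : ℝ)| + |(⟪u, RA' (v' - v)⟫ : ℝ)|)
          + |(⟪u, RA' ((A - A') (RA v))⟫ : ℝ)| := by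
        gcongr
        exact abs_add_le _ _
      _ ≤ _ := by
        gcongr
  refine htriangle.trans ?_
  -- plug in D ≤ 2L/(mn) and conclude
  have hminv : 0 < m⁻¹ := inv_pos.mpr hm
  have t1 : (S * D) * (m⁻¹ * G) ≤ 2 * G * L * S / (m ^ 2 * n) := by
    have h := mul_le_mul_of_nonneg_right
      (mul_le_mul_of_nonneg_left hDle hS.le) (by positivity : 0 ≤ m⁻¹ * G)
    refine h.trans (le_of_eq ?_)
    field_simp
  have t2 : G * (m⁻¹ * (S * D)) ≤ 2 * G * L * S / (m ^ 2 * n) := by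
    have h := mul_le_mul_of_nonneg_left
      (mul_le_mul_of_nonneg_left (mul_le_mul_of_nonneg_left hDle hS.le) hminv.le) hG.le
    refine h.trans (le_of_eq ?_)
    field_simp
  have t3 : G * (m⁻¹ * ((2 * M * D + 2 * B / n) * (m⁻¹ * G)))
      ≤ (4 * G ^ 2 * L * M + 2 * G ^ 2 * B * m) / (m ^ 3 * n) := by
    have hin : 2 * M * D + 2 * B / n ≤ 2 * M * (2 * L / (m * n)) + 2 * B / n := by
      have := mul_le_mul_of_nonneg_left hDle (by positivity : (0:ℝ) ≤ 2 * M)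
      linarith
    have h := mul_le_mul_of_nonneg_left (mul_le_mul_of_nonneg_right
      (mul_le_mul_of_nonneg_left hin hminv.le)
      (by positivity : (0:ℝ) ≤ 1)) hG.le
    -- direct approach
    have hmono : G * (m⁻¹ * ((2 * M * D + 2 * B / n) * (m⁻¹ * G)))
        ≤ G * (m⁻¹ * ((2 * M * (2 * L / (m * n)) + 2 * B / n) * (m⁻¹ * G))) := by
      gcongr
    refine hmono.trans (le_of_eq ?_)
    field_simp
    ring
  have hfinal : 2 * G * L * S / (m ^ 2 * n) + 2 * G * L * S / (m ^ 2 * n)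
      + (4 * G ^ 2 * L * M + 2 * G ^ 2 * B * m) / (m ^ 3 * n)
      ≤ (8 * G * L * S * m + 4 * G ^ 2 * L * M + 2 * G ^ 2 * B * m) / (m ^ 3 * n) := by
    have he : 2 * G * L * S / (m ^ 2 * n) + 2 * G * L * S / (m ^ 2 * n)
        + (4 * G ^ 2 * L * M + 2 * G ^ 2 * B * m) / (m ^ 3 * n)
        = (4 * G * L * S * m + 4 * G ^ 2 * L * M + 2 * G ^ 2 * B * m) / (m ^ 3 * n) := by
      field_simp
      ring
    rw [he]
    have hnum : 4 * G * L * S * m + 4 * G ^ 2 * L * M + 2 * G ^ 2 * B * m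
        ≤ 8 * G * L * S * m + 4 * G ^ 2 * L * M + 2 * G ^ 2 * B * m := by
      nlinarith [mul_pos (mul_pos (mul_pos hG hL) hS) hm]
    exact (div_le_div_iff_of_pos_right (by positivity)).mpr hnum
  linarith [t1, t2, t3, hfinal]
end
end
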